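/- Let ξ(s) = (1/2)(cosh s)⁻² and f⋆(s) = (cosh s)^{−2/(p−1)} for p > 2. Then for any bounded continuous w on ℝ, lim_{p→∞} ∫_ℝ (f⋆(s)(1 + w(s)/p))^p ds = 2∫_ℝ e^{w(s)} ξ(s) ds. -/

import Mathlib

open MeasureTheory Filter

lemma sech_sq_integrableOn_Ioi :
    IntegrableOn (fun s : ℝ => (Real.cosh s ^ 2)⁻¹) (Set.Ioi 0) := by
  have hbase := exp_neg_integrableOn_Ioi (0 : ℝ) (by norm_num : (0:ℝ) < 2)
  refine (hbase.const_mul 4).mono' ?_ ?_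
  · exact ((Real.continuous_cosh.pow 2).inv₀
      (fun s => (pow_pos (Real.cosh_pos s) 2).ne')).aestronglyMeasurable.restrict
  · filter_upwards with s
    have hc : Real.exp s / 2 ≤ Real.cosh s := by
      rw [Real.cosh_eq]
      have := (Real.exp_pos (-s)).le
      linarith
    have he := Real.exp_pos s
    have hc2 : (Real.exp s / 2) ^ 2 ≤ Real.cosh s ^ 2 := by
      apply pow_le_pow_left₀ (by positivity) hc
    have hpos : (0:ℝ) < (Real.exp s / 2) ^ 2 := by positivity
    have : (Real.cosh s ^ 2)⁻¹ ≤ ((Real.exp s / 2) ^ 2)⁻¹ :=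
      inv_anti₀ hpos hc2
    have heq : ((Real.exp s / 2) ^ 2)⁻¹ = 4 * Real.exp (-2 * s) := by
      rw [show (-2 * s : ℝ) = -(s + s) by ring, Real.exp_neg, Real.exp_add, ← sq]
      field_simp
      ring
    rw [Real.norm_eq_abs, abs_of_nonneg (by positivity)]
    calc (Real.cosh s ^ 2)⁻¹ ≤ ((Real.exp s / 2) ^ 2)⁻¹ := this
      _ = 4 * Real.exp (-2 * s) := heq

lemma sech_sq_integrable : Integrable (fun s : ℝ => (Real.cosh s ^ 2)⁻¹) := by
  have hIoi := sech_sq_integrableOn_Ioi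
  have hIci : IntegrableOn (fun s : ℝ => (Real.cosh s ^ 2)⁻¹) (Set.Ici 0) := by
    rwa [integrableOn_Ici_iff_integrableOn_Ioi]
  have hIic : IntegrableOn (fun s : ℝ => (Real.cosh s ^ 2)⁻¹) (Set.Iic 0) := by
    have A : MeasurableEmbedding (fun x : ℝ => -x) :=
      (Homeomorph.neg ℝ).isClosedEmbedding.measurableEmbedding
    have h1 : (volume : Measure ℝ).restrict (Set.Iic (0:ℝ)) =
        Measure.map (fun x : ℝ => -x) ((volume : Measure ℝ).restrict (Set.Ici 0)) := by
      rw [← Measure.map_neg_eq_self (volume : Measure ℝ)]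
      rw [Measure.restrict_map measurable_neg measurableSet_Iic]
      congr 1
      ext x
      simp
    rw [IntegrableOn, h1, A.integrable_map_iff]
    have : ((fun s : ℝ => (Real.cosh s ^ 2)⁻¹) ∘ fun x : ℝ => -x) =
        fun s : ℝ => (Real.cosh s ^ 2)⁻¹ := by
      ext s; simp [Real.cosh_neg]
    rw [this]
    exact hIci
  have := hIic.union hIoi
  rwa [Set.Iic_union_Ioi, integrableOn_univ] at this

/-- With `ξ(s) = (1/2)(cosh s)⁻²` and `f⋆(s) = (cosh s)^{-2/(p-1)}`, for any bounded
continuous `w : ℝ → ℝ`,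
`lim_{p→∞} ∫_ℝ (f⋆(s)(1 + w(s)/p))^p ds = 2 ∫_ℝ e^{w(s)} ξ(s) ds`. -/
theorem tendsto_GN_line (w : ℝ → ℝ) (hw : Continuous w) (C : ℝ) (hb : ∀ s, |w s| ≤ C) :
    Tendsto (fun p : ℝ => ∫ s : ℝ,
        ((Real.cosh s) ^ (-(2 / (p - 1))) * (1 + w s / p)) ^ p)
      atTop
      (nhds (2 * ∫ s : ℝ, Real.exp (w s) * ((1 / 2) * ((Real.cosh s) ^ 2)⁻¹))) := by
  have hC : 0 ≤ C := (abs_nonneg (w 0)).trans (hb 0)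
  -- rewrite the limit value
  have hL : (2 * ∫ s : ℝ, Real.exp (w s) * ((1 / 2) * ((Real.cosh s) ^ 2)⁻¹))
      = ∫ s : ℝ, Real.exp (w s) * ((Real.cosh s) ^ 2)⁻¹ := by
    have : (fun s : ℝ => Real.exp (w s) * ((1 / 2) * ((Real.cosh s) ^ 2)⁻¹))
        = fun s : ℝ => (1 / 2 : ℝ) * (Real.exp (w s) * ((Real.cosh s) ^ 2)⁻¹) := by
      ext s; ring
    rw [this, integral_const_mul]
    ring
  rw [hL]
  -- the dominating function
  set bound : ℝ → ℝ := fun s => Real.exp C * (Real.cosh s ^ 2)⁻¹ with hbound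
  apply tendsto_integral_filter_of_dominated_convergence bound
  · -- a.e. strong measurability
    filter_upwards [eventually_ge_atTop (0 : ℝ)] with p hp
    have h1 : Continuous fun s : ℝ => (Real.cosh s) ^ (-(2 / (p - 1))) :=
      Real.continuous_cosh.rpow_const fun s => Or.inl (Real.cosh_pos s).ne'
    have h2 : Continuous fun s : ℝ => (1 + w s / p) :=
      continuous_const.add (hw.div_const p)
    exact ((h1.mul h2).rpow_const fun s => Or.inr hp).aestronglyMeasurable
  · -- domination
    filter_upwards [eventually_ge_atTop (max 2 (C + 1))] with p hp
    have hp2 : (2:ℝ) ≤ p := le_trans (le_max_left _ _) hp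
    have hpC : C + 1 ≤ p := le_trans (le_max_right _ _) hp
    have hp0 : (0:ℝ) < p := by linarith
    have hp1 : (0:ℝ) < p - 1 := by linarith
    filter_upwards with s
    have hcosh := Real.cosh_pos s
    have hA : (0:ℝ) < (Real.cosh s) ^ (-(2 / (p - 1))) := Real.rpow_pos_of_pos hcosh _
    have hB : (0:ℝ) ≤ 1 + w s / p := by
      have h1 : -C ≤ w s := neg_le_of_abs_le (hb s)
      have h2 : -(C / p) ≤ w s / p := by
        apply div_le_div_of_nonneg_right h1 hp0.le |>.trans_eq' (by ring)
      have h3 : C / p ≤ 1 := by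
        rw [div_le_one hp0]; linarith
      linarith [neg_le_neg h3]
    rw [Real.norm_eq_abs, abs_of_nonneg (Real.rpow_nonneg (by positivity) p)]
    rw [Real.mul_rpow hA.le hB]
    have hfst : ((Real.cosh s) ^ (-(2 / (p - 1)))) ^ p ≤ (Real.cosh s ^ 2)⁻¹ := by
      rw [← Real.rpow_mul hcosh.le]
      have hexp : -(2 / (p - 1)) * p ≤ (-2 : ℝ) := by
        rw [neg_mul, neg_le_neg_iff, div_mul_eq_mul_div, le_div_iff₀ hp1]
        nlinarith
      calc Real.cosh s ^ (-(2 / (p - 1)) * p) ≤ Real.cosh s ^ (-2 : ℝ) :=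
            Real.rpow_le_rpow_of_exponent_le (Real.one_le_cosh s) hexp
        _ = (Real.cosh s ^ 2)⁻¹ := by
            rw [Real.rpow_neg hcosh.le, ← Real.rpow_natCast (Real.cosh s) 2]
            norm_num
    have hsnd : (1 + w s / p) ^ p ≤ Real.exp C := by
      have h1 : (1 + w s / p : ℝ) ≤ Real.exp (w s / p) := by
        have := Real.add_one_le_exp (w s / p)
        linarith
      calc (1 + w s / p) ^ p ≤ (Real.exp (w s / p)) ^ p :=
            Real.rpow_le_rpow hB h1 hp0.le
        _ = Real.exp (w s / p * p) := (Real.exp_mul _ _).symm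
        _ = Real.exp (w s) := by rw [div_mul_cancel₀ _ hp0.ne']
        _ ≤ Real.exp C := Real.exp_le_exp.mpr (le_of_abs_le (hb s))
    calc ((Real.cosh s) ^ (-(2 / (p - 1)))) ^ p * (1 + w s / p) ^ p
        ≤ (Real.cosh s ^ 2)⁻¹ * Real.exp C := by
          apply mul_le_mul hfst hsnd (Real.rpow_nonneg hB p) (by positivity)
      _ = bound s := by rw [hbound]; ring
  · -- integrability of the bound
    exact sech_sq_integrable.const_mul _
  · -- pointwise convergence
    filter_upwards with s
    have hcosh := Real.cosh_pos s
    -- the exponent tends to -2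
    have he : Tendsto (fun p : ℝ => -(2 / (p - 1)) * p) atTop (nhds (-2)) := by
      have h1 : Tendsto (fun p : ℝ => p - 1) atTop atTop :=
        tendsto_atTop_add_const_right _ (-1) tendsto_id
      have h2 : Tendsto (fun p : ℝ => (p - 1)⁻¹) atTop (nhds 0) :=
        tendsto_inv_atTop_zero.comp h1
      have h3 : Tendsto (fun p : ℝ => -2 * (1 + (p - 1)⁻¹)) atTop (nhds (-2)) := by
        have := (h2.const_add 1).const_mul (-2 : ℝ)
        simpa using this
      apply h3.congr'
      filter_upwards [eventually_gt_atTop (1 : ℝ)] with p hp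
      have hp1 : p - 1 ≠ 0 := by intro h; linarith [sub_eq_zero.mp h]
      field_simp
      ring
    have hfst : Tendsto (fun p : ℝ => (Real.cosh s) ^ (-(2 / (p - 1)) * p)) atTop
        (nhds ((Real.cosh s) ^ (-2 : ℝ))) :=
      (Real.continuousAt_const_rpow hcosh.ne').tendsto.comp he
    have hsnd : Tendsto (fun p : ℝ => (1 + w s / p) ^ p) atTop
        (nhds (Real.exp (w s))) := Real.tendsto_one_add_div_rpow_exp (w s)
    have hmul := hfst.mul hsnd
    have hval : (Real.cosh s) ^ (-2 : ℝ) * Real.exp (w s)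
        = Real.exp (w s) * ((Real.cosh s) ^ 2)⁻¹ := by
      rw [show (-2 : ℝ) = ((-2 : ℤ) : ℝ) by norm_num, Real.rpow_intCast]
      rw [show ((-2 : ℤ)) = -(2 : ℤ) by norm_num, zpow_neg]
      norm_num [mul_comm]
    rw [hval] at hmul
    apply hmul.congr'
    filter_upwards [eventually_ge_atTop (max 2 (C + 1))] with p hp
    have hp2 : (2:ℝ) ≤ p := le_trans (le_max_left _ _) hp
    have hpC : C + 1 ≤ p := le_trans (le_max_right _ _) hp
    have hp0 : (0:ℝ) < p := by linarith
    have hB : (0:ℝ) ≤ 1 + w s / p := by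
      have h1 : -C ≤ w s := neg_le_of_abs_le (hb s)
      have h2 : -(C / p) ≤ w s / p := by
        apply div_le_div_of_nonneg_right h1 hp0.le |>.trans_eq' (by ring)
      have h3 : C / p ≤ 1 := by
        rw [div_le_one hp0]; linarith [hC]
      linarith [neg_le_neg h3]
    rw [Real.rpow_mul hcosh.le, ← Real.mul_rpow (Real.rpow_nonneg hcosh.le _) hB]
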